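/- Let l, m be natural numbers with m ≤ l and m ≡ 2 (mod 4). If H_l^m(−2) ≡ 0 (mod 8), then l ≡ 5 (mod 8). -/

import Mathlib

/-- The coefficient `σ_l^m(k)` of the Holt–Ille polynomial `H_l^m`. -/
def sigmaLM (l m k : ℕ) : ℚ :=
  if (l + m) % 2 = 0 then
    (-2 : ℚ) ^ k * (((l - m) / 2).choose k : ℚ) * (((l + m) / 2).choose k : ℚ) /
      (((2 * k).choose k : ℚ))
  else
    (-2 : ℚ) ^ k * (((l - m) / 2).choose k : ℚ) * (((l + m) / 2).choose k : ℚ) /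
      ((((2 * k).choose k : ℚ)) * (2 * (k : ℚ) + 1))

/-- The value `H_l^m(−2) = Σ_{k=0}^{⌊(l−m)/2⌋} σ_l^m(k)`. -/
def HLM (l m : ℕ) : ℚ := ∑ k ∈ Finset.range ((l - m) / 2 + 1), sigmaLM l m k

/-- `a ≡ b (mod 2^N)` for rationals (with odd denominators), expressed via the 2-adic
norm on `ℚ₂`: it means `‖a − b‖₂ ≤ 2^(−N)`. -/
def Cong2 (a b : ℚ) (N : ℕ) : Prop :=
  ‖((a - b : ℚ) : ℚ_[2])‖ ≤ (2 : ℝ) ^ (-(N : ℤ))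

/- ### Auxiliary definitions and lemmas -/

/-- `15 · (σ_0 + σ_1 + σ_2 + σ_3)` in the even case, as an integer. -/
def NeZ (a b : ℕ) : ℤ :=
  15 - 15*a*b + 10*(a.choose 2)*(b.choose 2) - 6*(a.choose 3)*(b.choose 3)

/-- `105 · (σ_0 + σ_1 + σ_2 + σ_3)` in the odd case, as an integer. -/
def NoZ (a b : ℕ) : ℤ :=
  105 - 35*a*b + 14*(a.choose 2)*(b.choose 2) - 6*(a.choose 3)*(b.choose 3)

lemma key_even : ∀ a < 16, ∀ b < 16, b % 4 = (a + 2) % 4 → ((NeZ a b : ZMod 8)) ≠ 0 := by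
  decide

lemma key_odd : ∀ a < 16, ∀ b < 16, b % 4 = (a + 2) % 4 → ((NoZ a b : ZMod 8)) = 0 →
    (a + b) % 8 = 4 := by decide

lemma ch2_step (a : ℕ) : (((16+a).choose 2 : ℕ) : ZMod 8) = ((a.choose 2 : ℕ) : ZMod 8) := by
  rw [Nat.add_choose_eq, Finset.Nat.sum_antidiagonal_eq_sum_range_succ_mk]
  simp [Finset.sum_range_succ, show Nat.choose 16 2 = 120 from rfl,
    show (16:ZMod 8) = 0 from rfl, show (120:ZMod 8) = 0 from rfl]

lemma ch3_step (a : ℕ) : (((16+a).choose 3 : ℕ) : ZMod 8) = ((a.choose 3 : ℕ) : ZMod 8) := by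
  rw [Nat.add_choose_eq, Finset.Nat.sum_antidiagonal_eq_sum_range_succ_mk]
  simp [Finset.sum_range_succ, show Nat.choose 16 2 = 120 from rfl,
    show Nat.choose 16 3 = 560 from rfl, show (16:ZMod 8) = 0 from rfl,
    show (120:ZMod 8) = 0 from rfl, show (560:ZMod 8) = 0 from rfl]

lemma ch2_mod : ∀ q r : ℕ, (((16*q+r).choose 2 : ℕ) : ZMod 8) = ((r.choose 2 : ℕ) : ZMod 8) := by
  intro q
  induction q with
  | zero => simp
  | succ n ih => intro r; rw [show 16*(n+1)+r = 16+(16*n+r) by ring, ch2_step]; exact ih r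

lemma ch3_mod : ∀ q r : ℕ, (((16*q+r).choose 3 : ℕ) : ZMod 8) = ((r.choose 3 : ℕ) : ZMod 8) := by
  intro q
  induction q with
  | zero => simp
  | succ n ih => intro r; rw [show 16*(n+1)+r = 16+(16*n+r) by ring, ch3_step]; exact ih r

lemma ch2_red (a : ℕ) : ((a.choose 2 : ℕ) : ZMod 8) = (((a%16).choose 2 : ℕ) : ZMod 8) := by
  conv_lhs => rw [← Nat.div_add_mod a 16]
  exact ch2_mod _ _

lemma ch3_red (a : ℕ) : ((a.choose 3 : ℕ) : ZMod 8) = (((a%16).choose 3 : ℕ) : ZMod 8) := by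
  conv_lhs => rw [← Nat.div_add_mod a 16]
  exact ch3_mod _ _

lemma id_red (a : ℕ) : ((a : ℕ) : ZMod 8) = ((a%16 : ℕ) : ZMod 8) := by
  conv_lhs => rw [← Nat.div_add_mod a 16]
  push_cast
  simp [show (16:ZMod 8) = 0 from rfl]

lemma NeZ_cast (x y : ℕ) : ((NeZ x y : ZMod 8)) = 15 - 15*(x:ZMod 8)*(y:ZMod 8)
    + 10*((x.choose 2 : ℕ):ZMod 8)*((y.choose 2 : ℕ):ZMod 8)
    - 6*((x.choose 3 : ℕ):ZMod 8)*((y.choose 3 : ℕ):ZMod 8) := by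
  unfold NeZ
  push_cast
  ring

lemma NeZ_red (a b : ℕ) : ((NeZ a b : ZMod 8)) = ((NeZ (a%16) (b%16) : ZMod 8)) := by
  rw [NeZ_cast a b, NeZ_cast (a%16) (b%16), ch2_red a, ch2_red b, ch3_red a, ch3_red b,
    id_red a, id_red b]

lemma NoZ_cast (x y : ℕ) : ((NoZ x y : ZMod 8)) = 105 - 35*(x:ZMod 8)*(y:ZMod 8)
    + 14*((x.choose 2 : ℕ):ZMod 8)*((y.choose 2 : ℕ):ZMod 8)
    - 6*((x.choose 3 : ℕ):ZMod 8)*((y.choose 3 : ℕ):ZMod 8) := by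
  unfold NoZ
  push_cast
  ring

lemma NoZ_red (a b : ℕ) : ((NoZ a b : ZMod 8)) = ((NoZ (a%16) (b%16) : ZMod 8)) := by
  rw [NoZ_cast a b, NoZ_cast (a%16) (b%16), ch2_red a, ch2_red b, ch3_red a, ch3_red b,
    id_red a, id_red b]

lemma pow_aux : ∀ j : ℕ, j + 6 < 2 ^ (j + 3) := by
  intro j
  induction j with
  | zero => norm_num
  | succ n ih =>
    have : 2^(n+1+3) = 2 * 2^(n+3) := by ring
    omega

lemma valC {k : ℕ} (hk : 4 ≤ k) : padicValNat 2 ((2*k).choose k) ≤ k - 3 := by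
  rw [← Nat.factorization_def _ Nat.prime_two]
  rcases eq_or_ne k 4 with rfl | h4
  · by_contra hlt
    have h2 : 2 ≤ ((2*4).choose 4).factorization 2 := by omega
    have := (Nat.Prime.pow_dvd_iff_le_factorization Nat.prime_two (by decide)).mpr h2
    revert this; decide
  rcases eq_or_ne k 5 with rfl | h5
  · by_contra hlt
    have h2 : 3 ≤ ((2*5).choose 5).factorization 2 := by omega
    have := (Nat.Prime.pow_dvd_iff_le_factorization Nat.prime_two (by decide)).mpr h2
    revert this; decide
  have hk6 : 6 ≤ k := by omega
  have hlog : Nat.log 2 (2*k) = Nat.log 2 k + 1 := by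
    rw [mul_comm]; exact Nat.log_mul_base one_lt_two (by omega)
  have hlt : Nat.log 2 k < k - 3 := by
    apply Nat.log_lt_of_lt_pow (by omega)
    calc k = (k-6) + 6 := by omega
    _ < 2 ^ ((k-6)+3) := pow_aux _
    _ = 2 ^ (k-3) := by rw [show (k-6)+3 = k-3 from by omega]
  calc ((2*k).choose k).factorization 2 ≤ Nat.log 2 (2*k) := Nat.factorization_choose_le_log
  _ = Nat.log 2 k + 1 := hlog
  _ ≤ k - 3 := by omega

lemma sigma_bound {l m k : ℕ} (hk : 4 ≤ k) (hka : k ≤ (l-m)/2) (hab : (l-m)/2 ≤ (l+m)/2) :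
    padicNorm 2 (sigmaLM l m k) ≤ (2:ℚ)^(-(3:ℤ)) := by
  set a := (l-m)/2 with ha
  set b := (l+m)/2 with hb
  have hc1 : ((a.choose k : ℚ)) ≠ 0 := by
    exact_mod_cast (Nat.choose_pos hka).ne'
  have hc2 : ((b.choose k : ℚ)) ≠ 0 := by
    exact_mod_cast (Nat.choose_pos (hka.trans hab)).ne'
  have hC : (((2*k).choose k : ℚ)) ≠ 0 := by
    exact_mod_cast (Nat.choose_pos (by omega)).ne'
  have hodd : ((2*(k:ℚ)+1)) ≠ 0 := by positivity
  have hpow : ((-2 : ℚ)^k) ≠ 0 := by positivity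
  have hN : ((-2 : ℚ)^k * (a.choose k : ℚ) * (b.choose k : ℚ)) ≠ 0 :=
    mul_ne_zero (mul_ne_zero hpow hc1) hc2
  have hvneg2 : padicValRat 2 (-2 : ℚ) = 1 := by
    rw [padicValRat.neg]
    exact_mod_cast padicValRat.self one_lt_two
  have hvN : (k : ℤ) ≤ padicValRat 2 ((-2 : ℚ)^k * (a.choose k : ℚ) * (b.choose k : ℚ)) := by
    rw [padicValRat.mul (mul_ne_zero hpow hc1) hc2, padicValRat.mul hpow hc1,
      padicValRat.pow, hvneg2]
    have h1 : 0 ≤ padicValRat 2 ((a.choose k : ℚ)) := by rw [padicValRat.of_nat]; positivity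
    have h2 : 0 ≤ padicValRat 2 ((b.choose k : ℚ)) := by rw [padicValRat.of_nat]; positivity
    omega
  have hvC : padicValRat 2 (((2*k).choose k : ℚ)) ≤ (k : ℤ) - 3 := by
    rw [padicValRat.of_nat]
    have := valC hk
    omega
  have key : 3 ≤ padicValRat 2 (sigmaLM l m k) ∧ sigmaLM l m k ≠ 0 := by
    unfold sigmaLM
    rw [← ha, ← hb]
    by_cases hp : (l + m) % 2 = 0 <;> simp only [hp, if_true, if_false, reduceIte]
    · constructor
      · rw [padicValRat.div hN hC]
        omega
      · exact div_ne_zero hN hC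
    · have hD : (((2*k).choose k : ℚ)) * (2*(k:ℚ)+1) ≠ 0 := mul_ne_zero hC hodd
      constructor
      · rw [padicValRat.div hN hD, padicValRat.mul hC hodd]
        have : padicValRat 2 ((2*(k:ℚ)+1)) = 0 := by
          have h' : ((2*(k:ℚ)+1)) = ((2*k+1 : ℕ) : ℚ) := by push_cast; ring
          rw [h', padicValRat.of_nat]
          have : padicValNat 2 (2*k+1) = 0 := padicValNat.eq_zero_of_not_dvd (by omega)
          simp [this]
        omega
      · exact div_ne_zero hN hD
  rw [padicNorm.eq_zpow_of_nonzero key.2]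
  have hle : -padicValRat 2 (sigmaLM l m k) ≤ -3 := by omega
  calc ((2:ℕ):ℚ) ^ (-padicValRat 2 (sigmaLM l m k)) ≤ ((2:ℕ):ℚ) ^ (-(3:ℤ)) :=
        zpow_le_zpow_right₀ (by norm_num) hle
  _ = (2:ℚ) ^ (-(3:ℤ)) := by norm_num

lemma head_even (l m : ℕ) (h : (l+m) % 2 = 0) :
    (15:ℚ) * (∑ k ∈ Finset.range 4, sigmaLM l m k)
      = ((NeZ ((l-m)/2) ((l+m)/2) : ℤ) : ℚ) := by
  simp only [Finset.sum_range_succ, Finset.sum_range_zero, sigmaLM, h, if_true, reduceIte, NeZ,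
    show (2*0).choose 0 = 1 from rfl, show (2*1).choose 1 = 2 from rfl,
    show (2*2).choose 2 = 6 from rfl, show (2*3).choose 3 = 20 from rfl,
    Nat.choose_zero_right, Nat.choose_one_right]
  generalize (l-m)/2 = a
  generalize (l+m)/2 = b
  push_cast
  ring

lemma head_odd (l m : ℕ) (h : ¬ (l+m) % 2 = 0) :
    (105:ℚ) * (∑ k ∈ Finset.range 4, sigmaLM l m k)
      = ((NoZ ((l-m)/2) ((l+m)/2) : ℤ) : ℚ) := by
  simp only [Finset.sum_range_succ, Finset.sum_range_zero, sigmaLM, h, if_false, reduceIte, NoZ,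
    show (2*0).choose 0 = 1 from rfl, show (2*1).choose 1 = 2 from rfl,
    show (2*2).choose 2 = 6 from rfl, show (2*3).choose 3 = 20 from rfl,
    Nat.choose_zero_right, Nat.choose_one_right]
  generalize (l-m)/2 = a
  generalize (l+m)/2 = b
  push_cast
  ring

/-- If `m ≡ 2 (mod 4)`, `m ≤ l` and `H_l^m(−2) ≡ 0 (mod 8)`, then `l ≡ 5 (mod 8)`. -/
theorem l_mod_eight_of_HLM_cong_zero' (l m : ℕ) (hml : m ≤ l) (hm : m % 4 = 2)
    (h : Cong2 (HLM l m) 0 3) : l % 8 = 5 := by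
  set a := (l-m)/2 with ha
  set b := (l+m)/2 with hb
  have hab : a ≤ b := by omega
  -- Step 1: translate the hypothesis to a `padicNorm` bound.
  have hH : padicNorm 2 (HLM l m) ≤ (2:ℚ)^(-(3:ℤ)) := by
    unfold Cong2 at h
    rw [sub_zero, Padic.eq_padicNorm] at h
    have he : ((2:ℝ)) ^ (-((3:ℕ):ℤ)) = (((2:ℚ)^(-(3:ℤ)) : ℚ) : ℝ) := by push_cast; norm_num
    rw [he] at h
    exact_mod_cast h
  -- Step 2: split off the first four terms.
  set M := max 4 (a + 1) with hM
  have hsplit : HLM l m = (∑ k ∈ Finset.range 4, sigmaLM l m k)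
      + ∑ k ∈ Finset.Ico 4 M, sigmaLM l m k := by
    rw [Finset.sum_range_add_sum_Ico _ (le_max_left 4 (a+1))]
    unfold HLM
    rw [← ha]
    apply Finset.sum_subset (Finset.range_subset_range.2 (le_max_right 4 (a+1)))
    intro k hk hk'
    simp only [Finset.mem_range] at hk hk'
    have : a < k := by omega
    simp [sigmaLM, ← ha, Nat.choose_eq_zero_of_lt this]
  -- Step 3: tail bound.
  have htail : padicNorm 2 (∑ k ∈ Finset.Ico 4 M, sigmaLM l m k) ≤ (2:ℚ)^(-(3:ℤ)) := by
    rcases Finset.eq_empty_or_nonempty (Finset.Ico 4 M) with he | hne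
    · rw [he, Finset.sum_empty, padicNorm.zero]
      positivity
    · apply padicNorm.sum_le hne
      intro k hk
      simp only [Finset.mem_Ico] at hk
      have hk4 : 4 ≤ k := hk.1
      have hkM : k < M := hk.2
      have hka : k ≤ a := by omega
      exact sigma_bound hk4 (ha ▸ hka) (ha ▸ hb ▸ hab)
  -- Step 4: head bound.
  have hhead : padicNorm 2 (∑ k ∈ Finset.range 4, sigmaLM l m k) ≤ (2:ℚ)^(-(3:ℤ)) := by
    have heq : (∑ k ∈ Finset.range 4, sigmaLM l m k)
        = HLM l m - ∑ k ∈ Finset.Ico 4 M, sigmaLM l m k := by rw [hsplit]; ring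
    rw [heq]
    exact le_trans padicNorm.sub (max_le hH htail)
  -- Step 5: case on parity.
  by_cases hp : (l + m) % 2 = 0
  · -- even case: impossible
    exfalso
    have hq := head_even l m hp
    have hnorm : padicNorm 2 ((NeZ a b : ℤ) : ℚ) ≤ ((2:ℕ):ℚ)^(-(3:ℤ)) := by
      rw [← ha, ← hb] at hq
      rw [← hq, padicNorm.mul]
      have h15 : padicNorm 2 (15:ℚ) ≤ 1 := by exact_mod_cast padicNorm.of_int (15:ℤ)
      calc padicNorm 2 (15:ℚ) * padicNorm 2 (∑ k ∈ Finset.range 4, sigmaLM l m k)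
          ≤ 1 * ((2:ℚ)^(-(3:ℤ))) :=
            mul_le_mul h15 hhead (padicNorm.nonneg _) zero_le_one
      _ = ((2:ℕ):ℚ)^(-(3:ℤ)) := by norm_num
    have hdvd : (((2^3 : ℕ)) : ℤ) ∣ NeZ a b := by
      rw [padicNorm.dvd_iff_norm_le (p := 2)]
      exact_mod_cast hnorm
    have hzero : ((NeZ a b : ZMod 8)) = 0 := by
      apply (ZMod.intCast_zmod_eq_zero_iff_dvd _ 8).mpr
      exact_mod_cast hdvd
    rw [NeZ_red] at hzero
    have hb4 : b % 16 % 4 = (a % 16 + 2) % 4 := by omega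
    exact key_even (a%16) (Nat.mod_lt _ (by norm_num)) (b%16) (Nat.mod_lt _ (by norm_num))
      hb4 hzero
  · -- odd case
    have hq := head_odd l m hp
    have hnorm : padicNorm 2 ((NoZ a b : ℤ) : ℚ) ≤ ((2:ℕ):ℚ)^(-(3:ℤ)) := by
      rw [← ha, ← hb] at hq
      rw [← hq, padicNorm.mul]
      have h105 : padicNorm 2 (105:ℚ) ≤ 1 := by exact_mod_cast padicNorm.of_int (105:ℤ)
      calc padicNorm 2 (105:ℚ) * padicNorm 2 (∑ k ∈ Finset.range 4, sigmaLM l m k)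
          ≤ 1 * ((2:ℚ)^(-(3:ℤ))) :=
            mul_le_mul h105 hhead (padicNorm.nonneg _) zero_le_one
      _ = ((2:ℕ):ℚ)^(-(3:ℤ)) := by norm_num
    have hdvd : (((2^3 : ℕ)) : ℤ) ∣ NoZ a b := by
      rw [padicNorm.dvd_iff_norm_le (p := 2)]
      exact_mod_cast hnorm
    have hzero : ((NoZ a b : ZMod 8)) = 0 := by
      apply (ZMod.intCast_zmod_eq_zero_iff_dvd _ 8).mpr
      exact_mod_cast hdvd
    rw [NoZ_red] at hzero
    have hb4 : b % 16 % 4 = (a % 16 + 2) % 4 := by omega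
    have hk := key_odd (a%16) (Nat.mod_lt _ (by norm_num)) (b%16) (Nat.mod_lt _ (by norm_num))
      hb4 hzero
    omega
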